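/- Let $E$ be a complex Banach space and $f$ a bounded holomorphic function on $B_E$. Then $\sup_{x \in B_E}(1-\|x\|^2)\|f'(x)\| \leq 2 \sup_{x \in B_E}|f(x)|$; in particular every bounded holomorphic function on $B_E$ belongs to the natural Bloch space $\mathcal{B}_{nat}(B_E)$. -/

import Mathlib

open Metric Set Filter Topology

/-- Bounded holomorphic functions on the unit ball of a complex Banach space are
natural Bloch functions: `(1-‖x‖²)‖f'(x)‖ ≤ 2 sup |f|`. -/
theorem hinf_subset_nat_bloch {E : Type*} [NormedAddCommGroup E] [NormedSpace ℂ E]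
    [CompleteSpace E] (f : E → ℂ)
    (hf : DifferentiableOn ℂ f (ball (0 : E) 1))
    (hbd : BddAbove ((fun x => ‖f x‖) '' ball (0 : E) 1)) :
    ∀ x ∈ ball (0 : E) 1,
      (1 - ‖x‖ ^ 2) * ‖fderiv ℂ f x‖ ≤
        2 * sSup ((fun x => ‖f x‖) '' ball (0 : E) 1) := by
  intro x hx
  set M := sSup ((fun x => ‖f x‖) '' ball (0 : E) 1) with hM
  have hxn : ‖x‖ < 1 := by simpa using hx
  have hxn0 : (0:ℝ) ≤ ‖x‖ := norm_nonneg x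
  have hMle : ∀ y ∈ ball (0 : E) 1, ‖f y‖ ≤ M :=
    fun y hy => le_csSup hbd ⟨y, hy, rfl⟩
  have hM0 : 0 ≤ M :=
    le_trans (norm_nonneg _) (hMle 0 (by simp))
  set D := fderiv ℂ f x with hD
  have hfx : DifferentiableAt ℂ f x := hf.differentiableAt (isOpen_ball.mem_nhds hx)
  have hs : (0:ℝ) < 1 - ‖x‖ := by linarith
  -- key operator norm bound
  have hDle : ‖D‖ ≤ M / (1 - ‖x‖) := by
    refine ContinuousLinearMap.opNorm_le_bound _ (div_nonneg hM0 hs.le) fun v => ?_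
    rcases eq_or_ne v 0 with rfl | hv
    · simp
    have hvn : (0:ℝ) < ‖v‖ := norm_pos_iff.2 hv
    set r : ℝ := (1 - ‖x‖) / ‖v‖ with hr
    have hr0 : 0 < r := div_pos hs hvn
    set g : ℂ → ℂ := fun z => f (x + z • v) with hg
    have hgd : HasDerivAt g (D v) 0 := by
      have h1 : HasDerivAt (fun z : ℂ => x + z • v) v 0 := by
        simpa using ((hasDerivAt_id (0:ℂ)).smul_const v).const_add x
      have hfx' : HasFDerivAt f D (x + (0:ℂ) • v) := by simpa using hfx.hasFDerivAt
      exact hfx'.comp_hasDerivAt 0 h1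
    -- Cauchy estimate at each radius ρ < r
    have key : ∀ ρ ∈ Ioo (0:ℝ) r, ‖D v‖ ≤ M / ρ := by
      intro ρ hρ
      have hsub : ∀ z : ℂ, ‖z‖ ≤ ρ → x + z • v ∈ ball (0 : E) 1 := by
        intro z hz
        have : ‖x + z • v‖ ≤ ‖x‖ + ρ * ‖v‖ := by
          refine (norm_add_le _ _).trans ?_
          have : ‖z • v‖ ≤ ρ * ‖v‖ := by
            rw [norm_smul]
            exact mul_le_mul_of_nonneg_right hz (norm_nonneg v)
          linarith
        have hρr : ρ * ‖v‖ < 1 - ‖x‖ := by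
          have := hρ.2
          rw [hr, lt_div_iff₀ hvn] at this
          linarith
        simp only [mem_ball, dist_zero_right]
        linarith
      have hgdiff : DifferentiableOn ℂ g (closedBall (0:ℂ) ρ) := by
        intro z hz
        have hz' : ‖z‖ ≤ ρ := by simpa [dist_zero_right] using hz
        have : DifferentiableAt ℂ g z := by
          have hmem := hsub z hz'
          have hfz : DifferentiableAt ℂ f (x + z • v) :=
            hf.differentiableAt (isOpen_ball.mem_nhds hmem)
          exact hfz.comp z (by fun_prop)
        exact this.differentiableWithinAt
      have hcl : DiffContOnCl ℂ g (ball (0:ℂ) ρ) := by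
        refine DifferentiableOn.diffContOnCl ?_
        rwa [closure_ball (0:ℂ) hρ.1.ne']
      have hbound : ∀ z ∈ sphere (0:ℂ) ρ, ‖g z‖ ≤ M := by
        intro z hz
        have hz' : ‖z‖ ≤ ρ := by
          simp only [mem_sphere_iff_norm, sub_zero] at hz; exact hz.le
        exact hMle _ (hsub z hz')
      have := Complex.norm_deriv_le_of_forall_mem_sphere_norm_le hρ.1 hcl hbound
      rwa [hgd.deriv] at this
    -- pass to the limit ρ → r
    have hlim : Tendsto (fun ρ : ℝ => M / ρ) (𝓝[<] r) (𝓝 (M / r)) :=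
      (tendsto_const_nhds.div tendsto_id hr0.ne').mono_left nhdsWithin_le_nhds
    have hev : ∀ᶠ ρ in 𝓝[<] r, ‖D v‖ ≤ M / ρ := by
      filter_upwards [Ioo_mem_nhdsLT_of_mem (by constructor <;> [exact hr0; rfl] :
        r ∈ Ioc (0:ℝ) r)] with ρ hρ using key ρ hρ
    have hDv : ‖D v‖ ≤ M / r := ge_of_tendsto hlim hev
    have : M / r = M / (1 - ‖x‖) * ‖v‖ := by
      rw [hr, div_div_eq_mul_div, div_mul_eq_mul_div]
    calc ‖D v‖ ≤ M / r := hDv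
      _ = M / (1 - ‖x‖) * ‖v‖ := this
  -- conclude
  have h1 : (1 - ‖x‖) * ‖D‖ ≤ M := by
    rw [div_eq_mul_inv] at hDle
    have := mul_le_mul_of_nonneg_left hDle hs.le
    calc (1 - ‖x‖) * ‖D‖ ≤ (1 - ‖x‖) * (M * (1 - ‖x‖)⁻¹) := this
      _ = M := by field_simp
  have hDn : 0 ≤ ‖D‖ := norm_nonneg _
  nlinarith [mul_le_mul_of_nonneg_left h1 (by linarith : (0:ℝ) ≤ 1 + ‖x‖),
    mul_le_mul_of_nonneg_left hxn.le hM0, hDn, hM0]
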